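/- In a von Neumann algebra (or in B(H)), for projections P and Q, the sequence ((PQ)ⁿ)ₙ converges in the strong operator topology to the projection P ∧ Q onto the intersection of the ranges of P and Q. -/

import Mathlib

open Filter Topology ContinuousLinearMap

local notation "⟪" x ", " y "⟫" => @inner ℂ _ _ x y

section Aux
variable {H : Type*} [NormedAddCommGroup H] [InnerProductSpace ℂ H] [CompleteSpace H]

lemma sa_inner_move (A : H →L[ℂ] H) (hsa : IsSelfAdjoint A) (x y : H) :
    ⟪A x, y⟫ = ⟪x, A y⟫ := by
  conv_lhs => rw [← hsa.adjoint_eq]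
  exact ContinuousLinearMap.adjoint_inner_left A y x

lemma proj_norm_apply_le (P : H →L[ℂ] H) (hidem : IsIdempotentElem P)
    (hsa : IsSelfAdjoint P) (x : H) : ‖P x‖ ≤ ‖x‖ := by
  have hPP : P (P x) = P x := by
    conv_rhs => rw [← hidem]
    rfl
  have h1 : (‖P x‖ : ℝ) ^ 2 = RCLike.re ⟪x, P x⟫ := by
    rw [← inner_self_eq_norm_sq (𝕜 := ℂ)]
    rw [sa_inner_move P hsa x (P x), hPP]
  have h2 : RCLike.re ⟪x, P x⟫ ≤ ‖x‖ * ‖P x‖ := by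
    calc RCLike.re ⟪x, P x⟫ ≤ ‖⟪x, P x⟫‖ := RCLike.re_le_norm _
    _ ≤ ‖x‖ * ‖P x‖ := norm_inner_le_norm x (P x)
  nlinarith [norm_nonneg (P x), norm_nonneg x]

lemma proj_fix_of_norm_le (Q : H →L[ℂ] H) (hidem : IsIdempotentElem Q)
    (hsa : IsSelfAdjoint Q) (x : H) (h : ‖x‖ ≤ ‖Q x‖) : Q x = x := by
  have hQQ : Q (Q x) = Q x := by
    conv_rhs => rw [← hidem]
    rfl
  have hre : RCLike.re ⟪x, Q x⟫ = ‖Q x‖ ^ 2 := by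
    rw [← hQQ, ← sa_inner_move Q hsa x (Q x), hQQ, inner_self_eq_norm_sq (𝕜 := ℂ)]
  have hsub : ‖x - Q x‖ ^ 2 = ‖x‖ ^ 2 - ‖Q x‖ ^ 2 := by
    rw [@norm_sub_sq ℂ, hre]
    ring
  have : ‖x - Q x‖ ^ 2 ≤ 0 := by
    rw [hsub]
    nlinarith [norm_nonneg x, norm_nonneg (Q x)]
  have hz : ‖x - Q x‖ = 0 := by nlinarith [norm_nonneg (x - Q x)]
  exact (sub_eq_zero.mp (norm_eq_zero.mp hz)).symm


end Aux

/-- Von Neumann's alternating projection theorem: for orthogonal projections `P, Q` on a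
complex Hilbert space `H`, `(PQ)ⁿ` converges strongly to the orthogonal projection onto
`range P ∩ range Q`. -/
theorem alternating_projections_SOT_convergence
    (H : Type*) [NormedAddCommGroup H] [InnerProductSpace ℂ H] [CompleteSpace H]
    (P Q : H →L[ℂ] H)
    (hP_idem : IsIdempotentElem P) (hP_sa : IsSelfAdjoint P)
    (hQ_idem : IsIdempotentElem Q) (hQ_sa : IsSelfAdjoint Q)
    (K : Submodule ℂ H) [K.HasOrthogonalProjection]
    (hK : K = LinearMap.range (P : H →ₗ[ℂ] H) ⊓ LinearMap.range (Q : H →ₗ[ℂ] H)) :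
    ∀ x : H, Tendsto (fun n : ℕ => ((P * Q) ^ n) x) atTop
      (𝓝 ((K.orthogonalProjectionOnto x : H))) := by
  intro x
  set S : H →L[ℂ] H := Q * P * Q with hS
  have hSsa : IsSelfAdjoint S := by
    simp only [IsSelfAdjoint, hS, star_mul, hP_sa.star_eq, hQ_sa.star_eq, mul_assoc]
  -- pointwise idempotence
  have hPapp : ∀ v : H, P (P v) = P v := fun v => by
    rw [← ContinuousLinearMap.mul_apply, hP_idem]
  have hQapp : ∀ v : H, Q (Q v) = Q v := fun v => by
    rw [← ContinuousLinearMap.mul_apply, hQ_idem]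
  -- key algebraic identity
  have hSQ : ∀ n : ℕ, S ^ n * Q = Q * (P * Q) ^ n := by
    intro n
    induction n with
    | zero => simp
    | succ n ih =>
      have : S ^ (n + 1) * Q = S ^ n * (Q * P * Q * Q) := by
        rw [pow_succ]; noncomm_ring
      rw [this]
      have h2 : Q * P * Q * Q = Q * P * Q := by
        rw [mul_assoc, hQ_idem]
      rw [h2]
      calc S ^ n * (Q * P * Q) = (S ^ n * Q) * (P * Q) := by noncomm_ring
        _ = Q * (P * Q) ^ n * (P * Q) := by rw [ih]
        _ = Q * (P * Q) ^ (n + 1) := by rw [pow_succ]; noncomm_ring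
  set y : H := Q x with hy
  have hSny : ∀ n : ℕ, (S ^ n) y = Q (((P * Q) ^ n) x) := by
    intro n
    have := congrArg (fun (A : H →L[ℂ] H) => A x) (hSQ n)
    simpa using this
  have hQSny : ∀ n : ℕ, Q ((S ^ n) y) = (S ^ n) y := by
    intro n; rw [hSny n, hQapp]
  -- the real sequence
  set c : ℕ → ℝ := fun n => RCLike.re ⟪(S ^ n) y, y⟫ with hc
  have hmove : ∀ (n : ℕ) (a b : H), ⟪(S ^ n) a, b⟫ = ⟪a, (S ^ n) b⟫ :=
    fun n a b => sa_inner_move _ (hSsa.pow n) a b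
  have hc_even : ∀ k : ℕ, c (2 * k) = ‖(S ^ k) y‖ ^ 2 := by
    intro k
    have h1 : (S ^ (2 * k)) y = (S ^ k) ((S ^ k) y) := by
      rw [two_mul, pow_add]; rfl
    rw [hc]
    simp only [h1]
    rw [hmove k, ← inner_self_eq_norm_sq (𝕜 := ℂ)]
  have hc_odd : ∀ k : ℕ, c (2 * k + 1) = ‖P ((S ^ k) y)‖ ^ 2 := by
    intro k
    set z := (S ^ k) y with hz
    have hQz : Q z = z := hQSny k
    have h1 : (S ^ (2 * k + 1)) y = (S ^ k) (S z) := by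
      have : (2 : ℕ) * k + 1 = k + 1 + k := by ring
      rw [this, pow_add, pow_succ]
      rfl
    rw [hc]
    simp only [h1]
    rw [hmove k]
    have h2 : S z = Q (P z) := by
      show (Q * P * Q) z = Q (P z)
      have : (Q * P * Q) z = Q (P (Q z)) := rfl
      rw [this, hQz]
    rw [h2]
    rw [sa_inner_move Q hQ_sa (P z) z, hQz]
    rw [← hPapp z, sa_inner_move P hP_sa (P z) z, hPapp]
    rw [inner_self_eq_norm_sq (𝕜 := ℂ)]
  -- c is antitone and nonneg
  have hc_anti : Antitone c := by
    apply antitone_nat_of_succ_le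
    intro n
    rcases Nat.even_or_odd n with ⟨k, hk⟩ | ⟨k, hk⟩
    · have hn : n = 2 * k := by omega
      subst hn
      rw [hc_even, hc_odd]
      have := proj_norm_apply_le P hP_idem hP_sa ((S ^ k) y)
      nlinarith [norm_nonneg (P ((S ^ k) y))]
    · have hn : n = 2 * k + 1 := by omega
      subst hn
      have h2 : 2 * k + 1 + 1 = 2 * (k + 1) := by ring
      rw [h2, hc_even, hc_odd]
      have hstep : (S ^ (k + 1)) y = Q (P ((S ^ k) y)) := by
        rw [pow_succ']
        show S ((S ^ k) y) = Q (P ((S ^ k) y))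
        show Q (P (Q ((S ^ k) y))) = Q (P ((S ^ k) y))
        rw [hQSny]
      rw [hstep]
      have := proj_norm_apply_le Q hQ_idem hQ_sa (P ((S ^ k) y))
      nlinarith [norm_nonneg (Q (P ((S ^ k) y)))]
  have hc_nonneg : ∀ n, 0 ≤ c n := by
    intro n
    rcases Nat.even_or_odd n with ⟨k, hk⟩ | ⟨k, hk⟩
    · have hn : n = 2 * k := by omega
      rw [hn, hc_even]; positivity
    · have hn : n = 2 * k + 1 := by omega
      rw [hn, hc_odd]; positivity
  have hbdd : BddBelow (Set.range c) := ⟨0, by rintro _ ⟨n, rfl⟩; exact hc_nonneg n⟩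
  set ℓ : ℝ := ⨅ n, c n with hℓ
  have hc_tendsto : Tendsto c atTop (𝓝 ℓ) := tendsto_atTop_ciInf hc_anti hbdd
  have hℓ_le : ∀ n, ℓ ≤ c n := fun n => ciInf_le hbdd n
  -- inner products of iterates
  have hinner : ∀ n m : ℕ, RCLike.re ⟪(S ^ n) y, (S ^ m) y⟫ = c (n + m) := by
    intro n m
    rw [hmove n]
    have h1 : (S ^ n) ((S ^ m) y) = (S ^ (n + m)) y := by rw [pow_add]; rfl
    rw [h1, inner_re_symm]
  -- the sequence S^n y is Cauchy
  have hdist : ∀ n m : ℕ, ‖(S ^ n) y - (S ^ m) y‖ ^ 2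
      = c (2 * n) - 2 * c (n + m) + c (2 * m) := by
    intro n m
    rw [@norm_sub_sq ℂ, hc_even, hc_even, hinner]
  have hcauchy : CauchySeq (fun n : ℕ => (S ^ n) y) := by
    rw [Metric.cauchySeq_iff]
    intro ε hε
    have hε2 : (0 : ℝ) < ε ^ 2 / 2 := by positivity
    have hev : ∀ᶠ n in atTop, c n < ℓ + ε ^ 2 / 2 :=
      hc_tendsto.eventually_lt_const (by linarith)
    obtain ⟨N, hN⟩ := eventually_atTop.mp hev
    refine ⟨N, fun n hn m hm => ?_⟩
    have hsq : ‖(S ^ n) y - (S ^ m) y‖ ^ 2 < ε ^ 2 := by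
      rw [hdist]
      have h1 : c (2 * n) ≤ c N := hc_anti (by omega)
      have h2 : c (2 * m) ≤ c N := hc_anti (by omega)
      have h3 : ℓ ≤ c (n + m) := hℓ_le _
      have h4 : c N < ℓ + ε ^ 2 / 2 := hN N le_rfl
      linarith
    rw [dist_eq_norm]
    nlinarith [norm_nonneg ((S ^ n) y - (S ^ m) y)]
  obtain ⟨z, hz⟩ := cauchySeq_tendsto_of_complete hcauchy
  -- the limit of (PQ)^(n+1) x is P z
  have happ : ∀ n : ℕ, ((P * Q) ^ (n + 1)) x = P ((S ^ n) y) := by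
    intro n
    rw [hSny n]
    show ((P * Q) ^ (n + 1)) x = P (Q (((P * Q) ^ n) x))
    rw [pow_succ']
    rfl
  set L : H := P z with hL
  have hPz : Tendsto (fun n : ℕ => ((P * Q) ^ (n + 1)) x) atTop (𝓝 L) := by
    have := (P.continuous.tendsto z).comp hz
    exact this.congr (fun n => (happ n).symm)
  have hlim : Tendsto (fun n : ℕ => ((P * Q) ^ n) x) atTop (𝓝 L) :=
    (tendsto_add_atTop_iff_nat 1).mp hPz
  -- L is a fixed point of P * Q
  have hfixPQ : (P * Q) L = L := by
    have h1 : Tendsto (fun n : ℕ => ((P * Q) ^ (n + 1)) x) atTop (𝓝 ((P * Q) L)) := by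
      have h0 := ((P * Q).continuous.tendsto L).comp hlim
      apply h0.congr
      intro n
      show (P * Q) (((P * Q) ^ n) x) = ((P * Q) ^ (n + 1)) x
      rw [pow_succ']; rfl
    exact tendsto_nhds_unique h1 hPz
  have hQL : Q L = L := by
    apply proj_fix_of_norm_le Q hQ_idem hQ_sa
    have h1 : P (Q L) = L := hfixPQ
    calc ‖L‖ = ‖P (Q L)‖ := by rw [h1]
      _ ≤ ‖Q L‖ := proj_norm_apply_le P hP_idem hP_sa _
  have hPL : P L = L := by
    conv_lhs => rw [← hQL]
    exact hfixPQ
  -- L ∈ K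
  have hLK : L ∈ K := by
    rw [hK]
    exact ⟨⟨L, hPL⟩, ⟨L, hQL⟩⟩
  -- orthogonality
  have horth : ∀ w ∈ K, ⟪x - L, w⟫ = 0 := by
    intro w hw
    rw [hK, Submodule.mem_inf] at hw
    obtain ⟨⟨a, ha⟩, ⟨b, hb⟩⟩ := hw
    have hPw : P w = w := by rw [← ha]; exact hPapp a
    have hQw : Q w = w := by rw [← hb]; exact hQapp b
    have hstep : ∀ n : ℕ, ⟪((P * Q) ^ n) x, w⟫ = ⟪x, w⟫ := by
      intro n
      induction n with
      | zero => simp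
      | succ n ih =>
        have h1 : ((P * Q) ^ (n + 1)) x = P (Q (((P * Q) ^ n) x)) := by
          rw [pow_succ']; rfl
        rw [h1, sa_inner_move P hP_sa, hPw, sa_inner_move Q hQ_sa, hQw, ih]
    have h2 : Tendsto (fun n : ℕ => ⟪((P * Q) ^ n) x, w⟫) atTop (𝓝 ⟪L, w⟫) :=
      hlim.inner tendsto_const_nhds
    have h3 : Tendsto (fun n : ℕ => ⟪((P * Q) ^ n) x, w⟫) atTop (𝓝 ⟪x, w⟫) := by
      simp only [hstep]
      exact (tendsto_const_nhds : Tendsto (fun _ : ℕ => ⟪x, w⟫) atTop _)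
    have h4 : ⟪L, w⟫ = ⟪x, w⟫ := tendsto_nhds_unique h2 h3
    rw [inner_sub_left, h4, sub_self]
  have hproj : (K.orthogonalProjectionOnto x : H) = L :=
    K.eq_starProjection_of_mem_of_inner_eq_zero hLK horth
  rw [hproj]
  exact hlim
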